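/- A poset Q on [n] is [[n]]-representative if and only if Q decomposes into chains. Here Q is [[n]]-representative means: (i) if (i,k) is in the highest cover set Q^cov_h and (i,j) ∈ Q^cov then (j,k) ∉ [[n]], and (ii) if (i,k) ∈ Q^cov_h and (j,k) ∈ Q^cov then (i,j) ∉ [[n]]. -/

import Mathlib

open scoped Classical

abbrev Mat (n : ℕ) (F : Type*) := Matrix (Fin n) (Fin n) F

/-- The set of positions strictly above the diagonal. -/
def PosUpper (n : ℕ) : Set (Fin n × Fin n) := {p | p.1 < p.2}

/-- A poset on `[n]`: a set of strictly-upper positions closed under composition. -/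
def IsPoset {n : ℕ} (P : Set (Fin n × Fin n)) : Prop :=
  P ⊆ PosUpper n ∧ ∀ i j k : Fin n, (i, j) ∈ P → (j, k) ∈ P → (i, k) ∈ P

/-- The normality condition for a pattern poset. -/
def NormalPoset {n : ℕ} (P : Set (Fin n × Fin n)) : Prop :=
  ∀ i j k l : Fin n, i ≤ j → j < k → k ≤ l → (i, l) ∉ P → (j, k) ∉ P

/-- The pattern group `U_P` (as a set of matrices). -/
def UPg {n : ℕ} {F : Type*} [Field F] (P : Set (Fin n × Fin n)) : Set (Mat n F) :=
  {g | (∀ i, g i i = 1) ∧ ∀ i j : Fin n, i ≠ j → (i, j) ∉ P → g i j = 0}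

/-- The algebra `n_P` of strictly upper triangular matrices supported on `P`. -/
def nPa {n : ℕ} {F : Type*} [Field F] (P : Set (Fin n × Fin n)) : Set (Mat n F) :=
  {X | ∀ i j : Fin n, (i, j) ∉ P → X i j = 0}

/-- The support of a matrix. -/
def msupp {n : ℕ} {F : Type*} [Field F] (X : Mat n F) : Set (Fin n × Fin n) :=
  {p | X p.1 p.2 ≠ 0}

/-- `F_q`-labeled set partitions: matrices in `n_P` with at most one nonzero entry
in each row and each column. -/
def SPa {n : ℕ} {F : Type*} [Field F] (P : Set (Fin n × Fin n)) : Set (Mat n F) :=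
  {X | X ∈ nPa P ∧ (∀ i j j' : Fin n, X i j ≠ 0 → X i j' ≠ 0 → j = j') ∧
       (∀ i i' j : Fin n, X i j ≠ 0 → X i' j ≠ 0 → i = i')}

/-- `coadj^L_Q(λ) = {(j,k) ∈ P : ∃ i, (i,k) ∈ supp(λ), (i,j) ∈ Q}`. -/
def coadjL {n : ℕ} {F : Type*} [Field F] (P Q : Set (Fin n × Fin n)) (lam : Mat n F) :
    Set (Fin n × Fin n) :=
  {p | p ∈ P ∧ ∃ i : Fin n, (i, p.2) ∈ msupp lam ∧ (i, p.1) ∈ Q}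

/-- `coadj^R_Q(λ) = {(i,j) ∈ P : ∃ k, (i,k) ∈ supp(λ), (j,k) ∈ Q}`. -/
def coadjR {n : ℕ} {F : Type*} [Field F] (P Q : Set (Fin n × Fin n)) (lam : Mat n F) :
    Set (Fin n × Fin n) :=
  {p | p ∈ P ∧ ∃ k : Fin n, (p.1, k) ∈ msupp lam ∧ (p.2, k) ∈ Q}

/-- `coadj_Q(λ) = coadj^L_Q(λ) ∪ coadj^R_Q(λ)`. -/
def coadjF {n : ℕ} {F : Type*} [Field F] (P Q : Set (Fin n × Fin n)) (lam : Mat n F) :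
    Set (Fin n × Fin n) := coadjL P Q lam ∪ coadjR P Q lam

/-- `coaux_P(λ) = coadj_{[[n]]}(λ) \ coadj_P(λ)`. -/
def coauxF {n : ℕ} {F : Type*} [Field F] (P : Set (Fin n × Fin n)) (lam : Mat n F) :
    Set (Fin n × Fin n) := coadjF P (PosUpper n) lam \ coadjF P P lam

/-- The set of covers of a poset `P`. -/
def covers {n : ℕ} (P : Set (Fin n × Fin n)) : Set (Fin n × Fin n) :=
  {p | p ∈ P ∧ ¬ ∃ j : Fin n, (p.1, j) ∈ P ∧ (j, p.2) ∈ P}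

/-- A set of positions is independent if no two distinct elements share a first
coordinate or a second coordinate. -/
def Indep {n : ℕ} (S : Finset (Fin n × Fin n)) : Prop :=
  ∀ p ∈ S, ∀ q ∈ S, p ≠ q → p.1 ≠ q.1 ∧ p.2 ≠ q.2

/-- The weakly decreasing sequence of lengths `j - i` over `(i,j) ∈ S`, padded with
zeros. -/
noncomputable def lenSeq {n : ℕ} (S : Finset (Fin n × Fin n)) : ℕ → ℕ :=
  fun m => (((S.val.map fun p => (p.2 : ℕ) - (p.1 : ℕ)).sort (· ≤ ·)).reverse.getD m 0)

/-- Lexicographic comparison of integer sequences. -/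
def lexGe (f g : ℕ → ℕ) : Prop :=
  f = g ∨ ∃ m : ℕ, (∀ i < m, f i = g i) ∧ g m < f m

/-- `S` is a highest cover set of the poset `P`. -/
def IsHighestCoverSet {n : ℕ} (P : Set (Fin n × Fin n)) (S : Finset (Fin n × Fin n)) : Prop :=
  ↑S ⊆ covers P ∧ Indep S ∧
    ∀ T : Finset (Fin n × Fin n), ↑T ⊆ covers P → Indep T → lexGe (lenSeq S) (lenSeq T)

/-- `P` decomposes into chains: there is a partition of `[n]` (given by a coloring)
such that `P` consists exactly of the pairs `i < j` lying in a common part. -/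
def DecomposesIntoChains {n : ℕ} (P : Set (Fin n × Fin n)) : Prop :=
  ∃ c : Fin n → Fin n, ∀ i j : Fin n, i < j → ((i, j) ∈ P ↔ c i = c j)

/-- `Q` is a `P`-representative poset. -/
def PRep {n : ℕ} (P Q : Set (Fin n × Fin n)) : Prop :=
  Q ⊆ P ∧ ∀ S : Finset (Fin n × Fin n), IsHighestCoverSet Q S →
    (∀ p ∈ S, ∀ j : Fin n, (p.1, j) ∈ covers Q → (j, p.2) ∉ P) ∧
    (∀ p ∈ S, ∀ j : Fin n, (j, p.2) ∈ covers Q → (p.1, j) ∉ P)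


private def seqOf (M : Multiset ℕ) : ℕ → ℕ := fun m => ((M.sort (· ≤ ·)).reverse.getD m 0)

private lemma aux_getD_iff : ∀ (l : List ℕ), l.Pairwise (fun a b => b ≤ a) →
    ∀ (m v : ℕ), 1 ≤ v → (v ≤ l.getD m 0 ↔ m < l.countP (fun x => decide (v ≤ x)))
  | [], _, m, v, hv => by simp; omega
  | a :: l, hl, m, v, hv => by
    have hl' : l.Pairwise (fun a b => b ≤ a) := hl.of_cons
    have hhead : ∀ x ∈ l, x ≤ a := fun x hx => List.rel_of_pairwise_cons hl hx
    cases m with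
    | zero =>
      by_cases hva : v ≤ a
      · simp [List.countP_cons, hva]
      · have h0 : l.countP (fun x => decide (v ≤ x)) = 0 := by
          rw [List.countP_eq_zero]
          intro x hx
          simp only [decide_eq_true_eq]
          exact fun h => hva (h.trans (hhead x hx))
        simp [List.countP_cons, hva, h0]
    | succ m =>
      simp only [List.getD_cons_succ]
      by_cases hva : v ≤ a
      · rw [aux_getD_iff l hl' m v hv]
        simp [List.countP_cons, hva]
      · have h0 : l.countP (fun x => decide (v ≤ x)) = 0 := by
          rw [List.countP_eq_zero]
          intro x hx
          simp only [decide_eq_true_eq]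
          exact fun h => hva (h.trans (hhead x hx))
        rw [aux_getD_iff l hl' m v hv]
        simp [List.countP_cons, hva, h0]

private lemma seqOf_ge_iff (M : Multiset ℕ) (v m : ℕ) (hv : 1 ≤ v) :
    v ≤ seqOf M m ↔ m + 1 ≤ (M.filter (v ≤ ·)).card := by
  have hs : (M.sort (· ≤ ·)).reverse.Pairwise (fun a b => b ≤ a) := by
    rw [List.pairwise_reverse]
    exact Multiset.pairwise_sort M _
  rw [seqOf, aux_getD_iff _ hs m v hv]
  have : (M.filter (v ≤ ·)).card = ((M.sort (· ≤ ·)).reverse : List ℕ).countP (fun x => decide (v ≤ x)) := by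
    rw [← Multiset.countP_eq_card_filter, ← Multiset.coe_countP]
    congr 1
    rw [Multiset.coe_reverse, Multiset.sort_eq]
  omega

private lemma key_swap (M' R : Multiset ℕ) (z : ℕ) (hz : 1 ≤ z) (hR : ∀ r ∈ R, r < z) :
    ∃ m, (∀ i < m, seqOf (R + M') i = seqOf (z ::ₘ M') i) ∧
      seqOf (R + M') m < seqOf (z ::ₘ M') m := by
  set M := R + M' with hM
  set N := z ::ₘ M' with hN
  set m := (M'.filter (z ≤ ·)).card with hm
  have hMf : ∀ v, z ≤ v → M.filter (v ≤ ·) = M'.filter (v ≤ ·) := by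
    intro v hv
    rw [hM, Multiset.filter_add, Multiset.filter_eq_nil.2, zero_add]
    intro r hr
    exact fun h => absurd (hR r hr) (by omega)
  have hNcard : (N.filter (z ≤ ·)).card = m + 1 := by
    rw [hN, Multiset.filter_cons_of_pos _ le_rfl, Multiset.card_cons]
  have hNf : ∀ v, z < v → N.filter (v ≤ ·) = M'.filter (v ≤ ·) := by
    intro v hv
    rw [hN, Multiset.filter_cons_of_neg _ (by omega)]
  refine ⟨m, ?_, ?_⟩
  · intro i hi
    have hMi : z ≤ seqOf M i := by
      rw [seqOf_ge_iff M z i hz, hMf z le_rfl]; omega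
    have hNi : z ≤ seqOf N i := by
      rw [seqOf_ge_iff N z i hz, hNcard]; omega
    apply le_antisymm
    · set v := seqOf M i with hv
      have hv1 : 1 ≤ v := hz.trans hMi
      have h1 : i + 1 ≤ (M.filter (v ≤ ·)).card := (seqOf_ge_iff M v i hv1).1 le_rfl
      rw [seqOf_ge_iff N v i hv1]
      rcases eq_or_lt_of_le hMi with hzv | hzv
      · rw [← hzv, hNcard]; omega
      · rw [hNf v hzv, ← hMf v (le_of_lt hzv)]; exact h1
    · set v := seqOf N i with hv
      have hv1 : 1 ≤ v := hz.trans hNi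
      have h1 : i + 1 ≤ (N.filter (v ≤ ·)).card := (seqOf_ge_iff N v i hv1).1 le_rfl
      rw [seqOf_ge_iff M v i hv1]
      rcases eq_or_lt_of_le hNi with hzv | hzv
      · rw [← hzv, hMf z le_rfl]; omega
      · rw [hMf v (le_of_lt hzv), ← hNf v hzv]; exact h1
  · have h1 : z ≤ seqOf N m := by
      rw [seqOf_ge_iff N z m hz, hNcard]
    have h2 : ¬ z ≤ seqOf M m := by
      rw [seqOf_ge_iff M z m hz, hMf z le_rfl]; omega
    omega

private lemma not_lexGe_of_lt {f g : ℕ → ℕ} (m : ℕ) (hpre : ∀ i < m, f i = g i)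
    (hm : f m < g m) : ¬ lexGe f g := by
  rintro (rfl | ⟨m', hpre', hm'⟩)
  · omega
  · rcases Nat.lt_trichotomy m m' with h | rfl | h
    · have := hpre' m h; omega
    · omega
    · have := hpre m' h; omega

private lemma lexGe_total (f g : ℕ → ℕ) : lexGe f g ∨ lexGe g f := by
  by_cases h : f = g
  · exact Or.inl (Or.inl h)
  · have hne : ∃ m, f m ≠ g m := by
      by_contra hc; push_neg at hc; exact h (funext hc)
    set m := Nat.find hne with hm
    have hmne : f m ≠ g m := Nat.find_spec hne
    have hpre : ∀ i < m, f i = g i := by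
      intro i hi
      by_contra hc
      have h2 : m ≤ i := Nat.find_le hc
      omega
    rcases Nat.lt_or_ge (f m) (g m) with h' | h'
    · exact Or.inr (Or.inr ⟨m, fun i hi => (hpre i hi).symm, h'⟩)
    · exact Or.inl (Or.inr ⟨m, hpre, by omega⟩)

private lemma lexGe_trans {f g h : ℕ → ℕ} (h1 : lexGe f g) (h2 : lexGe g h) : lexGe f h := by
  rcases h1 with rfl | ⟨m1, p1, l1⟩
  · exact h2
  rcases h2 with rfl | ⟨m2, p2, l2⟩
  · exact Or.inr ⟨m1, p1, l1⟩
  refine Or.inr ⟨min m1 m2, fun i hi => ?_, ?_⟩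
  · rw [p1 i (by omega), p2 i (by omega)]
  · rcases Nat.lt_trichotomy m1 m2 with hlt | rfl | hlt
    · rw [Nat.min_eq_left (le_of_lt hlt)]
      have := p2 m1 hlt; omega
    · simp only [Nat.min_self]; omega
    · rw [Nat.min_eq_right (le_of_lt hlt)]
      have := p1 m2 hlt; omega

private lemma exists_top {α : Type*} [DecidableEq α] (r : α → α → Prop)
    (htot : ∀ a b, r a b ∨ r b a) (htr : ∀ {a b c}, r a b → r b c → r a c) :
    ∀ s : Finset α, s.Nonempty → ∃ a ∈ s, ∀ b ∈ s, r a b := by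
  intro s
  induction s using Finset.induction_on with
  | empty => rintro ⟨x, hx⟩; simp at hx
  | @insert a s ha ih =>
    intro _
    rcases s.eq_empty_or_nonempty with rfl | hne
    · exact ⟨a, by simp, by simpa using (htot a a).elim id id⟩
    · obtain ⟨b, hb, hbtop⟩ := ih hne
      rcases htot b a with h | h
      · refine ⟨b, Finset.mem_insert_of_mem hb, ?_⟩
        intro c hc
        rcases Finset.mem_insert.1 hc with rfl | hc
        · exact h
        · exact hbtop c hc
      · refine ⟨a, Finset.mem_insert_self _ _, ?_⟩
        intro c hc
        rcases Finset.mem_insert.1 hc with rfl | hc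
        · exact (htot c c).elim id id
        · exact htr h (hbtop c hc)

section PosetAux

variable {n : ℕ} {Q : Set (Fin n × Fin n)}

private lemma mem_posupper {p : Fin n × Fin n} (h : p ∈ PosUpper n) : p.1 < p.2 := h

private lemma coverdec_up (hQ : IsPoset Q) : ∀ (d : ℕ) (i j : Fin n), (j : ℕ) - (i : ℕ) ≤ d →
    (i, j) ∈ Q → ∃ a, (i, a) ∈ covers Q ∧ (a = j ∨ (a, j) ∈ Q) := by
  intro d
  induction d with
  | zero =>
    intro i j hd hij
    have h1 : i < j := hQ.1 hij
    rw [Fin.lt_def] at h1; omega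
  | succ d ih =>
    intro i j hd hij
    by_cases hc : (i, j) ∈ covers Q
    · exact ⟨j, hc, Or.inl rfl⟩
    · have hm : ∃ m, (i, m) ∈ Q ∧ (m, j) ∈ Q := by
        by_contra hno
        exact hc ⟨hij, hno⟩
      obtain ⟨m, him, hmj⟩ := hm
      have h1 : i < m := hQ.1 him
      have h2 : m < j := hQ.1 hmj
      rw [Fin.lt_def] at h1 h2
      obtain ⟨a, hac, hrest⟩ := ih i m (by omega) him
      refine ⟨a, hac, Or.inr ?_⟩
      rcases hrest with rfl | ham
      · exact hmj
      · exact hQ.2 a m j ham hmj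

private lemma coverdec_down (hQ : IsPoset Q) : ∀ (d : ℕ) (i j : Fin n), (j : ℕ) - (i : ℕ) ≤ d →
    (i, j) ∈ Q → ∃ a, (a, j) ∈ covers Q ∧ (a = i ∨ (i, a) ∈ Q) := by
  intro d
  induction d with
  | zero =>
    intro i j hd hij
    have h1 : i < j := hQ.1 hij
    rw [Fin.lt_def] at h1; omega
  | succ d ih =>
    intro i j hd hij
    by_cases hc : (i, j) ∈ covers Q
    · exact ⟨i, hc, Or.inl rfl⟩
    · have hm : ∃ m, (i, m) ∈ Q ∧ (m, j) ∈ Q := by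
        by_contra hno
        exact hc ⟨hij, hno⟩
      obtain ⟨m, him, hmj⟩ := hm
      have h1 : i < m := hQ.1 him
      have h2 : m < j := hQ.1 hmj
      rw [Fin.lt_def] at h1 h2
      obtain ⟨a, hac, hrest⟩ := ih m j (by omega) hmj
      refine ⟨a, hac, Or.inr ?_⟩
      rcases hrest with rfl | ham
      · exact him
      · exact hQ.2 i m a him ham

private lemma comp_up (hQ : IsPoset Q)
    (huniq : ∀ a b c : Fin n, (a, b) ∈ covers Q → (a, c) ∈ covers Q → b = c) :
    ∀ (d : ℕ) (i j k : Fin n), (j : ℕ) - (i : ℕ) ≤ d →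
      (i, j) ∈ Q → (i, k) ∈ Q → j < k → (j, k) ∈ Q := by
  intro d
  induction d with
  | zero =>
    intro i j k hd hij hik hjk
    have h1 : i < j := hQ.1 hij
    rw [Fin.lt_def] at h1; omega
  | succ d ih =>
    intro i j k hd hij hik hjk
    obtain ⟨a, hac, ha⟩ := coverdec_up hQ ((j : ℕ) - (i : ℕ)) i j le_rfl hij
    obtain ⟨b, hbc, hb⟩ := coverdec_up hQ ((k : ℕ) - (i : ℕ)) i k le_rfl hik
    have hab : a = b := huniq i a b hac hbc
    subst hab
    rcases ha with rfl | haj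
    · rcases hb with rfl | hbk
      · exact absurd hjk (lt_irrefl _)
      · exact hbk
    · rcases hb with rfl | hbk
      · exact absurd hjk (lt_asymm (show a < j from hQ.1 haj))
      · have h1 : i < a := hQ.1 hac.1
        have h2 : a < j := hQ.1 haj
        rw [Fin.lt_def] at h1 h2
        exact ih a j k (by omega) haj hbk hjk

private lemma comp_down (hQ : IsPoset Q)
    (huniq : ∀ a b c : Fin n, (a, c) ∈ covers Q → (b, c) ∈ covers Q → a = b) :
    ∀ (d : ℕ) (i j k : Fin n), (k : ℕ) - (j : ℕ) ≤ d →
      (i, k) ∈ Q → (j, k) ∈ Q → i < j → (i, j) ∈ Q := by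
  intro d
  induction d with
  | zero =>
    intro i j k hd hik hjk hij
    have h1 : j < k := hQ.1 hjk
    rw [Fin.lt_def] at h1; omega
  | succ d ih =>
    intro i j k hd hik hjk hij
    obtain ⟨a, hac, ha⟩ := coverdec_down hQ ((k : ℕ) - (i : ℕ)) i k le_rfl hik
    obtain ⟨b, hbc, hb⟩ := coverdec_down hQ ((k : ℕ) - (j : ℕ)) j k le_rfl hjk
    have hab : a = b := huniq a b k hac hbc
    subst hab
    rcases ha with rfl | hia
    · rcases hb with rfl | hjb
      · exact absurd hij (lt_irrefl _)
      · exact absurd hij (lt_asymm (show j < a from hQ.1 hjb))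
    · rcases hb with rfl | hjb
      · exact hia
      · have h1 : a < k := hQ.1 hac.1
        have h2 : j < a := hQ.1 hjb
        rw [Fin.lt_def] at h1 h2
        exact ih i j a (by omega) hia hjb hij

private lemma indep_insert_sdiff {S : Finset (Fin n × Fin n)} (hS : Indep S)
    (E : Finset (Fin n × Fin n)) (q : Fin n × Fin n)
    (hrow : ∀ p ∈ S, p.1 = q.1 → p ∈ E) (hcol : ∀ p ∈ S, p.2 = q.2 → p ∈ E) :
    Indep (insert q (S \ E)) := by
  intro p hp r hr hne
  rcases Finset.mem_insert.1 hp with rfl | hp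
  · rcases Finset.mem_insert.1 hr with rfl | hr
    · exact absurd rfl hne
    · obtain ⟨hrS, hrE⟩ := Finset.mem_sdiff.1 hr
      exact ⟨fun h => hrE (hrow r hrS h.symm), fun h => hrE (hcol r hrS h.symm)⟩
  · obtain ⟨hpS, hpE⟩ := Finset.mem_sdiff.1 hp
    rcases Finset.mem_insert.1 hr with rfl | hr
    · exact ⟨fun h => hpE (hrow p hpS h), fun h => hpE (hcol p hpS h)⟩
    · obtain ⟨hrS, hrE⟩ := Finset.mem_sdiff.1 hr
      exact hS p hpS r hrS hne

private lemma improve_false (hQ : IsPoset Q) {S : Finset (Fin n × Fin n)}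
    (hsub : ↑S ⊆ covers Q)
    (hmax : ∀ T : Finset (Fin n × Fin n), ↑T ⊆ covers Q → Indep T →
      lexGe (lenSeq S) (lenSeq T))
    (E : Finset (Fin n × Fin n)) (hE : E ⊆ S) (q : Fin n × Fin n) (hqc : q ∈ covers Q)
    (hqS : q ∉ S)
    (hlen : ∀ p ∈ E, (p.2 : ℕ) - (p.1 : ℕ) < (q.2 : ℕ) - (q.1 : ℕ))
    (hind : Indep (insert q (S \ E))) : False := by
  classical
  set f : Fin n × Fin n → ℕ := fun p => (p.2 : ℕ) - (p.1 : ℕ) with hf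
  set T : Finset (Fin n × Fin n) := insert q (S \ E) with hT
  have hT1 : ↑T ⊆ covers Q := by
    intro p hp
    rcases Finset.mem_insert.1 hp with rfl | hp
    · exact hqc
    · exact hsub (Finset.mem_sdiff.1 hp).1
  have hqT : q ∉ S \ E := fun h => hqS (Finset.mem_sdiff.1 h).1
  have hz : 1 ≤ f q := by
    have hlt : q.1 < q.2 := hQ.1 hqc.1
    rw [Fin.lt_def] at hlt
    simp only [hf]; omega
  have hSval : S.val.map f = E.val.map f + (S \ E).val.map f := by
    rw [Finset.sdiff_val, ← Multiset.map_add, add_tsub_cancel_of_le (Finset.val_le_iff.2 hE)]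
  have hTval : T.val.map f = f q ::ₘ (S \ E).val.map f := by
    rw [hT, Finset.insert_val_of_notMem hqT, Multiset.map_cons]
  have hlS : lenSeq S = seqOf (S.val.map f) := rfl
  have hlT : lenSeq T = seqOf (T.val.map f) := rfl
  obtain ⟨m, hpre, hlt⟩ := key_swap ((S \ E).val.map f) (E.val.map f) (f q) hz (by
    intro r hr
    obtain ⟨p, hpE, rfl⟩ := Multiset.mem_map.1 hr
    exact hlen p hpE)
  have hge := hmax T hT1 hind
  rw [hlS, hlT, hSval, hTval] at hge
  exact not_lexGe_of_lt m hpre hlt hge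

end PosetAux

/-- A poset `Q` is `[[n]]`-representative iff it decomposes into
chains. -/
theorem nn_representative_iff_chains {n : ℕ} (Q : Set (Fin n × Fin n)) (hQ : IsPoset Q) :
    PRep (PosUpper n) Q ↔ DecomposesIntoChains Q := by
  classical
  constructor
  · intro hrep
    -- existence of a highest cover set
    obtain ⟨S, hSmem, hSmax'⟩ :=
      exists_top (fun S T : Finset (Fin n × Fin n) => lexGe (lenSeq S) (lenSeq T))
        (fun a b => lexGe_total _ _) (fun h1 h2 => lexGe_trans h1 h2)
        (Finset.univ.filter fun S => ↑S ⊆ covers Q ∧ Indep S)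
        ⟨∅, Finset.mem_filter.2 ⟨Finset.mem_univ _, by simp,
          fun p hp => absurd hp (Finset.notMem_empty p)⟩⟩
    have hSsub : ↑S ⊆ covers Q := (Finset.mem_filter.1 hSmem).2.1
    have hSind : Indep S := (Finset.mem_filter.1 hSmem).2.2
    have hmax : ∀ T : Finset (Fin n × Fin n), ↑T ⊆ covers Q → Indep T →
        lexGe (lenSeq S) (lenSeq T) :=
      fun T h1 h2 => hSmax' T (Finset.mem_filter.2 ⟨Finset.mem_univ _, h1, h2⟩)
    obtain ⟨c1, c2⟩ := hrep.2 S ⟨hSsub, hSind, hmax⟩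
    -- every cover of Q belongs to S
    have hcovS : ∀ p : Fin n × Fin n, p ∈ covers Q → p ∈ S := by
      rintro ⟨a, b⟩ hab
      by_contra habS
      have hab_lt : a < b := hQ.1 hab.1
      have hrow : ∃ k, ((a, k) : Fin n × Fin n) ∈ S := by
        by_contra hno
        push_neg at hno
        by_cases hcol : ∃ i, ((i, b) : Fin n × Fin n) ∈ S
        · obtain ⟨i, hib⟩ := hcol
          have hai : ¬ i < a := c2 (i, b) hib a hab
          have hib_lt : i < b := hQ.1 (hSsub hib).1
          have hane : a ≠ i := fun h => hno b (by rw [h]; exact hib)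
          refine improve_false hQ hSsub hmax {(i, b)} (Finset.singleton_subset_iff.2 hib)
            (a, b) hab (fun h => hno b h) ?_ ?_
          · intro p hp
            rw [Finset.mem_singleton] at hp
            subst hp
            simp only
            rw [Fin.lt_def] at hab_lt hib_lt hai
            have hane' : (a : ℕ) ≠ (i : ℕ) := fun h => hane (Fin.val_injective h)
            omega
          · refine indep_insert_sdiff hSind _ _ ?_ ?_
            · intro p hp hpa
              exfalso
              apply hno p.2
              have hpa' : p.1 = a := hpa
              rw [← hpa', Prod.mk.eta]
              exact hp
            · intro p hp hpb
              rw [Finset.mem_singleton]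
              by_contra hne
              exact (hSind p hp (i, b) hib hne).2 hpb
        · push_neg at hcol
          refine improve_false hQ hSsub hmax ∅ (Finset.empty_subset _) (a, b) hab
            (fun h => hno b h) (fun p hp => absurd hp (Finset.notMem_empty p)) ?_
          refine indep_insert_sdiff hSind _ _ ?_ ?_
          · intro p hp hpa
            exfalso
            apply hno p.2
            have hpa' : p.1 = a := hpa
            rw [← hpa', Prod.mk.eta]
            exact hp
          · intro p hp hpb
            exfalso
            apply hcol p.1
            have hpb' : p.2 = b := hpb
            rw [← hpb', Prod.mk.eta]
            exact hp
      obtain ⟨k, hak⟩ := hrow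
      have hkb : ¬ b < k := c1 (a, k) hak b hab
      have hak_lt : a < k := hQ.1 (hSsub hak).1
      have hkneb : k ≠ b := fun h => habS (by rw [← h]; exact hak)
      have hkb' : (k : ℕ) < (b : ℕ) := by
        rw [Fin.lt_def] at hkb
        have : (k : ℕ) ≠ (b : ℕ) := fun h => hkneb (Fin.val_injective h)
        omega
      by_cases hcol : ∃ i, ((i, b) : Fin n × Fin n) ∈ S
      · obtain ⟨i, hib⟩ := hcol
        have hai : ¬ i < a := c2 (i, b) hib a hab
        have hib_lt : i < b := hQ.1 (hSsub hib).1
        have hane : a ≠ i := fun h => habS (by rw [h]; exact hib)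
        refine improve_false hQ hSsub hmax {(a, k), (i, b)} ?_ (a, b) hab habS ?_ ?_
        · intro p hp
          rcases Finset.mem_insert.1 hp with rfl | hp
          · exact hak
          · rw [Finset.mem_singleton] at hp
            subst hp
            exact hib
        · intro p hp
          rcases Finset.mem_insert.1 hp with rfl | hp
          · simp only
            rw [Fin.lt_def] at hab_lt hak_lt
            omega
          · rw [Finset.mem_singleton] at hp
            subst hp
            simp only
            rw [Fin.lt_def] at hab_lt hib_lt hai
            have hane' : (a : ℕ) ≠ (i : ℕ) := fun h => hane (Fin.val_injective h)
            omega
        · refine indep_insert_sdiff hSind _ _ ?_ ?_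
          · intro p hp hpa
            have : p = (a, k) := by
              by_contra hne
              exact (hSind p hp (a, k) hak hne).1 hpa
            rw [this]
            exact Finset.mem_insert_self _ _
          · intro p hp hpb
            have : p = (i, b) := by
              by_contra hne
              exact (hSind p hp (i, b) hib hne).2 hpb
            rw [this]
            exact Finset.mem_insert_of_mem (Finset.mem_singleton_self _)
      · push_neg at hcol
        refine improve_false hQ hSsub hmax {(a, k)} (Finset.singleton_subset_iff.2 hak)
          (a, b) hab habS ?_ ?_
        · intro p hp
          rw [Finset.mem_singleton] at hp
          subst hp
          simp only
          rw [Fin.lt_def] at hab_lt hak_lt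
          omega
        · refine indep_insert_sdiff hSind _ _ ?_ ?_
          · intro p hp hpa
            rw [Finset.mem_singleton]
            by_contra hne
            exact (hSind p hp (a, k) hak hne).1 hpa
          · intro p hp hpb
            exfalso
            apply hcol p.1
            have hpb' : p.2 = b := hpb
            rw [← hpb', Prod.mk.eta]
            exact hp
    -- unique covers up and down
    have huU : ∀ a b c : Fin n, (a, b) ∈ covers Q → (a, c) ∈ covers Q → b = c := by
      intro a b c h1 h2
      by_contra hbc
      exact (hSind (a, b) (hcovS _ h1) (a, c) (hcovS _ h2) (by simp [hbc])).1 rfl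
    have huD : ∀ a b c : Fin n, (a, c) ∈ covers Q → (b, c) ∈ covers Q → a = b := by
      intro a b c h1 h2
      by_contra hab
      exact (hSind (a, c) (hcovS _ h1) (b, c) (hcovS _ h2) (by simp [hab])).2 rfl
    -- the coloring
    set u : Fin n → Finset (Fin n) := fun i => Finset.univ.filter fun j => (i, j) ∈ Q with hu
    set c : Fin n → Fin n := fun i => if h : (u i).Nonempty then (u i).max' h else i with hcdef
    have hcmem : ∀ i j : Fin n, (i, j) ∈ Q → (i, c i) ∈ Q ∧ j ≤ c i := by
      intro i j hij
      have hjmem : j ∈ u i := Finset.mem_filter.2 ⟨Finset.mem_univ _, hij⟩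
      have hne : (u i).Nonempty := ⟨j, hjmem⟩
      have hceq : c i = (u i).max' hne := by
        rw [hcdef]
        exact dif_pos hne
      constructor
      · rw [hceq]
        exact (Finset.mem_filter.1 ((u i).max'_mem hne)).2
      · rw [hceq]
        exact Finset.le_max' _ j hjmem
    have hcself : ∀ i : Fin n, (∀ j, (i, j) ∉ Q) → c i = i := by
      intro i h
      have hne : ¬ (u i).Nonempty := by
        rintro ⟨j, hj⟩
        exact h j (Finset.mem_filter.1 hj).2
      rw [hcdef]
      exact dif_neg hne
    have hctop : ∀ i j : Fin n, (i, j) ∈ Q → c i = c j := by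
      intro i j hij
      obtain ⟨hici, hjci⟩ := hcmem i j hij
      rcases eq_or_lt_of_le hjci with heq | hlt
      · have hempty : ∀ x, (j, x) ∉ Q := by
          intro x hx
          have h2 := (hcmem i x (hQ.2 i j x hij hx)).2
          have h3 : j < x := hQ.1 hx
          rw [← heq] at h2
          exact absurd h3 (not_lt.2 h2)
        rw [hcself j hempty]
        exact heq.symm
      · have hjc : (j, c i) ∈ Q :=
          comp_up hQ huU ((j : ℕ) - (i : ℕ)) i j (c i) le_rfl hij hici hlt
        have h1 : c i ≤ c j := (hcmem j (c i) hjc).2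
        have h2 : c j ≤ c i := by
          have hjcj : (j, c j) ∈ Q := (hcmem j (c i) hjc).1
          exact (hcmem i (c j) (hQ.2 i j (c j) hij hjcj)).2
        exact le_antisymm h1 h2
    have hchain : ∀ i j : Fin n, i < j → c i = c j → (i, j) ∈ Q := by
      intro i j hij hcc
      by_cases hju : ∃ x, (j, x) ∈ Q
      · obtain ⟨x, hjx⟩ := hju
        have hjcj : (j, c j) ∈ Q := (hcmem j x hjx).1
        have hgt : j < c j := hQ.1 hjcj
        have hine : c i ≠ i := by
          rw [hcc]
          intro h
          rw [Fin.lt_def] at hij hgt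
          have : (c j : ℕ) = (i : ℕ) := by rw [h]
          omega
        have hiQ : (i, c i) ∈ Q := by
          by_cases h : ∃ x, (i, x) ∈ Q
          · obtain ⟨y, hy⟩ := h
            exact (hcmem i y hy).1
          · push_neg at h
            exact absurd (hcself i h) hine
        rw [hcc] at hiQ
        exact comp_down hQ huD ((c j : ℕ) - (j : ℕ)) i j (c j) le_rfl hiQ hjcj hij
      · push_neg at hju
        have hcjj : c j = j := hcself j hju
        have hine : c i ≠ i := by
          rw [hcc, hcjj]
          intro h
          rw [Fin.lt_def] at hij
          have : (j : ℕ) = (i : ℕ) := by rw [h]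
          omega
        have hiQ : (i, c i) ∈ Q := by
          by_cases h : ∃ x, (i, x) ∈ Q
          · obtain ⟨y, hy⟩ := h
            exact (hcmem i y hy).1
          · push_neg at h
            exact absurd (hcself i h) hine
        rw [hcc, hcjj] at hiQ
        exact hiQ
    exact ⟨c, fun i j hij => ⟨hctop i j, hchain i j hij⟩⟩
  · rintro ⟨c, hc⟩
    refine ⟨hQ.1, ?_⟩
    intro S hS
    have hsub := hS.1
    constructor
    · rintro ⟨i, k⟩ hpS j hij hjk
      have hjk' : j < k := hjk
      have hik : (i, k) ∈ covers Q := hsub hpS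
      have h1 : (i, j) ∈ Q := hij.1
      have hQik : (i, k) ∈ Q := hik.1
      have hij' : i < j := hQ.1 h1
      have hik' : i < k := hQ.1 hQik
      have hcc : c j = c k := by
        rw [← (hc i j hij').1 h1]
        exact (hc i k hik').1 hQik
      exact hik.2 ⟨j, h1, (hc j k hjk').2 hcc⟩
    · rintro ⟨i, k⟩ hpS j hjk hij
      have hij' : i < j := hij
      have hik : (i, k) ∈ covers Q := hsub hpS
      have h1 : (j, k) ∈ Q := hjk.1
      have hQik : (i, k) ∈ Q := hik.1
      have hjk' : j < k := hQ.1 h1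
      have hik' : i < k := hQ.1 hQik
      have hcc : c i = c j := by
        rw [(hc i k hik').1 hQik]
        exact ((hc j k hjk').1 h1).symm
      exact hik.2 ⟨j, (hc i j hij').2 hcc, h1⟩
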